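/- In the blowup model, suppose Λ has uniform density κ for some κ > 0. Then t_max(x) is finite for every x > 0, and the map x ↦ t_max(x) is a surjection from (0,∞) onto (0,∞). (This is the abstract content of the paper's proposition that the blowup-time map t_max : π^{-1}(γ(0)) → (0,∞) is surjective.) -/

import Mathlib

/-!
STATEMENT 8: In the blowup model, if `Λ` has uniform density `κ > 0`, then `t_max x`
is finite for every `x > 0`, and `x ↦ t_max x` maps `(0,∞)` onto `(0,∞)`.
-/

open scoped Classical

open Set in
/-- The blowup model: magnification bounds `1 < αmin ≤ αmax`, a set `Λ ⊆ (0,∞) × (0,∞)`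
of singularities with distinct first coordinates which is finite in every box
`(0,T] × (0,H]`, and a magnification function `mag` taking values in `[αmin, αmax]`
on `Λ`. -/
structure BlowupModel where
  αmin : ℝ
  αmax : ℝ
  one_lt_αmin : 1 < αmin
  αmin_le_αmax : αmin ≤ αmax
  Λ : Set (ℝ × ℝ)
  Λ_pos : ∀ p ∈ Λ, 0 < p.1 ∧ 0 < p.2
  Λ_inj : ∀ p ∈ Λ, ∀ q ∈ Λ, p.1 = q.1 → p = q
  Λ_locFin : ∀ T H : ℝ, (Λ ∩ Set.Ioc 0 T ×ˢ Set.Ioc 0 H).Finite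
  mag : ℝ × ℝ → ℝ
  mag_mem : ∀ p ∈ Λ, αmin ≤ mag p ∧ mag p ≤ αmax

namespace BlowupModel

/-- The singularities that a section of current value `s` can hit after time `τ`. -/
def eventSet (M : BlowupModel) (τ s : ℝ) : Set (ℝ × ℝ) :=
  {p | p ∈ M.Λ ∧ τ < p.1 ∧ p.2 < s}

/-- The singularity realizing the next event after time `τ` for a section of current
value `s` (the one with least time coordinate; junk value if there is none). -/
noncomputable def nextSing (M : BlowupModel) (τ s : ℝ) : ℝ × ℝ :=
  Classical.epsilon fun p => p ∈ M.eventSet τ s ∧ ∀ q ∈ M.eventSet τ s, p.1 ≤ q.1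

/-- `evt M x n` is the pair (time of the `n`-th event, value of the section `s_x` just
after the `n`-th event), starting from `evt M x 0 = (0, x)`; at an event at the
singularity `(t,b)` the value jumps from `s` to `b + mag (t,b) * (s - b)`.  If no
further event occurs, the pair is repeated forever. -/
noncomputable def evt (M : BlowupModel) (x : ℝ) : ℕ → ℝ × ℝ
  | 0 => (0, x)
  | n + 1 =>
    let τ := (evt M x n).1
    let s := (evt M x n).2
    if (M.eventSet τ s).Nonempty then
      ((M.nextSing τ s).1,
        (M.nextSing τ s).2 + M.mag (M.nextSing τ s) * (s - (M.nextSing τ s).2))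
    else (τ, s)

/-- The blowup time of the section `s_x`: the supremum of the event times if there are
infinitely many events, and `∞` otherwise. -/
noncomputable def tmax (M : BlowupModel) (x : ℝ) : EReal :=
  if ∀ n, (M.eventSet (M.evt x n).1 (M.evt x n).2).Nonempty then
    ⨆ n, ((M.evt x n).1 : EReal)
  else ⊤

/-- The value of the section `s_x` at time `t` (meaningful for `0 ≤ t < tmax x`): the
value just after the last event at time `≤ t`. -/
noncomputable def sx (M : BlowupModel) (x t : ℝ) : ℝ :=
  sSup ((fun n => (M.evt x n).2) '' {n | (M.evt x n).1 ≤ t})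

end BlowupModel

/-- `Λ` has uniform density `κ`: for every `ε > 0` there is `A_ε > 0` such that every
box `(t, t+w] × (0, h]` with `t ≥ 0` and area `w·h ≥ A_ε` contains between
`(κ−ε)·w·h` and `(κ+ε)·w·h` singularities. -/
def BlowupModel.UniformDensity (M : BlowupModel) (κ : ℝ) : Prop :=
  ∀ ε : ℝ, 0 < ε → ∃ A : ℝ, 0 < A ∧
    ∀ t : ℝ, 0 ≤ t → ∀ w h : ℝ, 0 < w → 0 < h → A ≤ w * h →
      (κ - ε) * w * h ≤ ((M.Λ ∩ Set.Ioc t (t + w) ×ˢ Set.Ioc 0 h).ncard : ℝ) ∧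
        ((M.Λ ∩ Set.Ioc t (t + w) ×ˢ Set.Ioc 0 h).ncard : ℝ) ≤ (κ + ε) * w * h

namespace BlowupModel

variable {M : BlowupModel}

lemma αmax_pos : (0:ℝ) < M.αmax := lt_trans one_pos (lt_of_lt_of_le M.one_lt_αmin M.αmin_le_αmax)

lemma one_le_αmax : (1:ℝ) ≤ M.αmax := le_of_lt (lt_of_lt_of_le M.one_lt_αmin M.αmin_le_αmax)

lemma exists_min_eventSet {τ s : ℝ} (h : (M.eventSet τ s).Nonempty) :
    ∃ p, p ∈ M.eventSet τ s ∧ ∀ q ∈ M.eventSet τ s, p.1 ≤ q.1 := by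
  obtain ⟨p0, hp0⟩ := h
  have hfin : (M.Λ ∩ Set.Ioc 0 p0.1 ×ˢ Set.Ioc 0 s).Finite := M.Λ_locFin p0.1 s
  set F := M.eventSet τ s ∩ {q | q.1 ≤ p0.1} with hF
  have hFsub : F ⊆ M.Λ ∩ Set.Ioc 0 p0.1 ×ˢ Set.Ioc 0 s := by
    rintro q ⟨⟨hqΛ, _, hq2⟩, hle⟩
    exact ⟨hqΛ, ⟨(M.Λ_pos q hqΛ).1, hle⟩, ⟨(M.Λ_pos q hqΛ).2, le_of_lt hq2⟩⟩
  obtain ⟨p, hpF, hmin⟩ := Set.exists_min_image F Prod.fst (hfin.subset hFsub)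
    ⟨p0, hp0, show p0.1 ≤ p0.1 from le_refl _⟩
  refine ⟨p, hpF.1, fun q hq => ?_⟩
  by_cases hq1 : q.1 ≤ p0.1
  · exact hmin q ⟨hq, hq1⟩
  · exact le_trans (hmin p0 ⟨hp0, show p0.1 ≤ p0.1 from le_refl _⟩) (le_of_not_ge hq1)

lemma nextSing_spec {τ s : ℝ} (h : (M.eventSet τ s).Nonempty) :
    M.nextSing τ s ∈ M.eventSet τ s ∧ ∀ q ∈ M.eventSet τ s, (M.nextSing τ s).1 ≤ q.1 :=
  Classical.epsilon_spec (exists_min_eventSet h)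

lemma exists_D (κ : ℝ) (hκ : 0 < κ) (hud : M.UniformDensity κ) :
    ∃ D : ℝ, 0 < D ∧ ∀ τ : ℝ, 0 ≤ τ → ∀ s : ℝ, 0 < s →
      ∃ p ∈ M.Λ, τ < p.1 ∧ p.1 ≤ τ + D / s ∧ 0 < p.2 ∧ p.2 ≤ s / 2 := by
  obtain ⟨A, hA, hbox⟩ := hud (κ/2) (by positivity)
  refine ⟨2*A + 4/κ, by positivity, fun τ hτ s hs => ?_⟩
  set D := 2*A + 4/κ with hD
  have hDpos : 0 < D := by positivity
  have hwh : (D/s) * (s/2) = D/2 := by field_simp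
  have harea : A ≤ (D/s) * (s/2) := by
    rw [hwh, hD]; have : 0 < 4/κ := by positivity
    linarith
  obtain ⟨hlow, _⟩ := hbox τ hτ (D/s) (s/2) (by positivity) (by positivity) harea
  have h1 : (1:ℝ) ≤ ((M.Λ ∩ Set.Ioc τ (τ + D/s) ×ˢ Set.Ioc 0 (s/2)).ncard : ℝ) := by
    refine le_trans ?_ hlow
    have : (κ - κ/2) * (D/s) * (s/2) = κ * D / 4 := by field_simp; ring
    rw [this, hD]
    have : κ * (2*A + 4/κ) / 4 = κ * A / 2 + 1 := by field_simp; ring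
    rw [this]; nlinarith
  have hne : (M.Λ ∩ Set.Ioc τ (τ + D/s) ×ˢ Set.Ioc 0 (s/2)).Nonempty := by
    apply Set.nonempty_of_ncard_ne_zero
    intro h0; rw [h0] at h1; norm_num at h1
  obtain ⟨p, hpΛ, hp1, hp2⟩ := hne
  exact ⟨p, hpΛ, hp1.1, hp1.2, hp2.1, hp2.2⟩

end BlowupModel
namespace BlowupModel

variable {M : BlowupModel} {D : ℝ}

/-- Abbreviated density hypothesis. -/
def DProp (M : BlowupModel) (D : ℝ) : Prop :=
  ∀ τ : ℝ, 0 ≤ τ → ∀ s : ℝ, 0 < s →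
    ∃ p ∈ M.Λ, τ < p.1 ∧ p.1 ≤ τ + D / s ∧ 0 < p.2 ∧ p.2 ≤ s / 2

lemma evt_zero (x : ℝ) : M.evt x 0 = (0, x) := rfl

lemma state_pos {x : ℝ} (hx : 0 < x) : ∀ n, 0 ≤ (M.evt x n).1 ∧ x ≤ (M.evt x n).2 := by
  intro n
  induction n with
  | zero => exact ⟨le_refl _, le_refl _⟩
  | succ n ih =>
    obtain ⟨h1, h2⟩ := ih
    show (0 ≤ (M.evt x (n+1)).1 ∧ x ≤ (M.evt x (n+1)).2)
    rw [evt]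
    split
    · next h =>
      obtain ⟨⟨hΛ, hτ, hb⟩, _⟩ := nextSing_spec h
      have hmag := M.mag_mem _ hΛ
      have h1' : 1 < M.mag (M.nextSing (M.evt x n).1 (M.evt x n).2) :=
        lt_of_lt_of_le M.one_lt_αmin hmag.1
      constructor
      · exact le_of_lt (M.Λ_pos _ hΛ).1
      · simp only
        nlinarith [hb, h2]
    · exact ⟨h1, h2⟩

section

variable (hD : M.DProp D) {x : ℝ} (hx : 0 < x)
include hD hx

lemma evt_ne (n : ℕ) : (M.eventSet (M.evt x n).1 (M.evt x n).2).Nonempty := by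
  obtain ⟨h1, h2⟩ := state_pos hx n
  obtain ⟨p, hp, h3, _, _, h6⟩ := hD _ h1 _ (lt_of_lt_of_le hx h2)
  exact ⟨p, hp, h3, lt_of_le_of_lt h6 (by linarith)⟩

lemma step_facts (n : ℕ) :
    ∃ q ∈ M.Λ, (M.evt x n).1 < q.1 ∧ 0 < q.2 ∧ q.2 < (M.evt x n).2 ∧
      (M.evt x (n+1)).1 = q.1 ∧
      (M.evt x (n+1)).2 = q.2 + M.mag q * ((M.evt x n).2 - q.2) ∧
      M.αmin ≤ M.mag q ∧ M.mag q ≤ M.αmax ∧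
      (∀ r ∈ M.eventSet (M.evt x n).1 (M.evt x n).2, q.1 ≤ r.1) := by
  have hne := evt_ne hD hx n
  obtain ⟨⟨hΛ, hτ, hb⟩, hmin⟩ := nextSing_spec hne
  have heq : M.evt x (n+1) = ((M.nextSing (M.evt x n).1 (M.evt x n).2).1,
      (M.nextSing (M.evt x n).1 (M.evt x n).2).2 +
        M.mag (M.nextSing (M.evt x n).1 (M.evt x n).2) *
          ((M.evt x n).2 - (M.nextSing (M.evt x n).1 (M.evt x n).2).2)) := by
    rw [evt]; exact if_pos hne
  refine ⟨M.nextSing (M.evt x n).1 (M.evt x n).2, hΛ, hτ,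
    (M.Λ_pos _ hΛ).2, hb, by rw [heq], by rw [heq], (M.mag_mem _ hΛ).1, (M.mag_mem _ hΛ).2, hmin⟩

lemma t_lt_succ (n : ℕ) : (M.evt x n).1 < (M.evt x (n+1)).1 := by
  obtain ⟨q, _, hτ, _, _, h1, _⟩ := step_facts hD hx n
  rw [h1]; exact hτ

lemma s_lt_succ (n : ℕ) : (M.evt x n).2 < (M.evt x (n+1)).2 := by
  obtain ⟨q, _, _, _, hb, _, h2, hmag1, _, _⟩ := step_facts hD hx n
  rw [h2]
  nlinarith [M.one_lt_αmin]

lemma t_strictMono : StrictMono (fun n => (M.evt x n).1) :=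
  strictMono_nat_of_lt_succ (t_lt_succ hD hx)

lemma s_mono : Monotone (fun n => (M.evt x n).2) :=
  monotone_nat_of_le_succ (fun n => le_of_lt (s_lt_succ hD hx n))

omit hD in
lemma s_pos (n : ℕ) : 0 < (M.evt x n).2 := lt_of_lt_of_le hx (state_pos hx n).2

/-- Milestone lemma: either all later event times stay within `D / s n` of `t n`,
or the value gets multiplied by `λ = (αmin+1)/2` within that time window. -/
lemma milestone (n : ℕ) :
    (∀ k, n ≤ k → (M.evt x k).1 ≤ (M.evt x n).1 + D / (M.evt x n).2) ∨
    (∃ m, n < m ∧ (M.evt x m).1 ≤ (M.evt x n).1 + D / (M.evt x n).2 ∧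
      ((M.αmin + 1)/2) * (M.evt x n).2 ≤ (M.evt x m).2) := by
  obtain ⟨hτ0, _⟩ := state_pos hx n
  obtain ⟨p, hpΛ, hp1, hp2, hp3, hp4⟩ := hD _ hτ0 _ (s_pos hx n)
  by_cases hall : ∀ k, n ≤ k → (M.evt x k).1 < p.1
  · exact Or.inl (fun k hk => le_trans (le_of_lt (hall k hk)) hp2)
  · push_neg at hall
    have hex : ∃ k, n ≤ k ∧ p.1 ≤ (M.evt x k).1 := by
      obtain ⟨k, hk1, hk2⟩ := hall; exact ⟨k, hk1, hk2⟩
    classical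
    have hmn : n ≤ Nat.find hex := (Nat.find_spec hex).1
    have hmt := (Nat.find_spec hex).2
    have hminm : ∀ k, k < Nat.find hex → ¬(n ≤ k ∧ p.1 ≤ (M.evt x k).1) :=
      fun k hk => Nat.find_min hex hk
    obtain ⟨m, hmeq⟩ : ∃ m, Nat.find hex = m := ⟨_, rfl⟩
    rw [hmeq] at hmn hmt hminm
    have hmpos : n < m := by
      rcases lt_or_eq_of_le hmn with h | h
      · exact h
      · exfalso; rw [← h] at hmt; exact absurd hmt (not_le.mpr hp1)
    obtain ⟨m', rfl⟩ : ∃ m', m = m' + 1 := ⟨m - 1, by omega⟩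
    have hm'n : n ≤ m' := by omega
    have hm't : (M.evt x m').1 < p.1 := by
      have := hminm m' (by omega)
      push_neg at this
      exact this hm'n
    obtain ⟨q, hqΛ, hqτ, hqb0, hqb, hq1, hq2, hqm1, hqm2, hqmin⟩ := step_facts hD hx m'
    have hsm' : (M.evt x n).2 ≤ (M.evt x m').2 := s_mono hD hx hm'n
    have hspn : 0 < (M.evt x n).2 := s_pos hx n
    have hpev : p ∈ M.eventSet (M.evt x m').1 (M.evt x m').2 :=
      ⟨hpΛ, hm't, by nlinarith⟩
    have hqp : q.1 ≤ p.1 := hqmin p hpev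
    have hq1p : q.1 = p.1 := le_antisymm hqp (by rw [← hq1]; exact hmt)
    have hqeq : q = p := M.Λ_inj q hqΛ p hpΛ hq1p
    subst hqeq
    refine Or.inr ⟨m' + 1, hmpos, by rw [hq1, ← hq1p]; rw [hq1p]; exact hp2, ?_⟩
    rw [hq2]
    have h1 : M.αmin ≤ M.mag q := hqm1
    have h2 : 1 < M.αmin := M.one_lt_αmin
    nlinarith [mul_nonneg (sub_nonneg.mpr h1) (sub_nonneg.mpr (le_of_lt hqb)),
      mul_nonneg (le_of_lt (lt_trans one_pos h2)) (sub_nonneg.mpr hsm'),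
      mul_nonneg (sub_nonneg.mpr (le_of_lt h2)) (by linarith : (0:ℝ) ≤ (M.evt x n).2/2 - q.2)]

end

end BlowupModel
namespace BlowupModel

variable {M : BlowupModel} {D E : ℝ}

section

variable (hD : M.DProp D) (hD0 : 0 < D) (hE0 : 0 < E) (hDE : D ≤ E)
  (hrec : D + E / ((M.αmin + 1)/2) ≤ E) {x : ℝ} (hx : 0 < x)

include hD hD0 hE0 hDE hrec hx in
lemma time_bound : ∀ k n : ℕ, n ≤ k →
    (M.evt x k).1 ≤ (M.evt x n).1 + E / (M.evt x n).2 := by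
  have hlam : (1:ℝ) < (M.αmin + 1)/2 := by have := M.one_lt_αmin; linarith
  have key : ∀ d : ℕ, ∀ n k : ℕ, n ≤ k → k - n = d →
      (M.evt x k).1 ≤ (M.evt x n).1 + E / (M.evt x n).2 := by
    intro d
    induction d using Nat.strong_induction_on with
    | _ d ih =>
      intro n k hnk hd
      have hsn := s_pos (M := M) hx n
      rcases milestone hD hx n with h | ⟨m, hm, hTm, hsm⟩
      · refine le_trans (h k hnk) ?_
        have : D / (M.evt x n).2 ≤ E / (M.evt x n).2 := by gcongr
        linarith
      · by_cases hkm : k ≤ m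
        · have : (M.evt x k).1 ≤ (M.evt x m).1 := (t_strictMono hD hx).monotone hkm
          have hDs : D / (M.evt x n).2 ≤ E / (M.evt x n).2 := by gcongr
          linarith
        · push_neg at hkm
          have hrecur := ih (k - m) (by omega) m k (by omega) rfl
          have hsmpos : 0 < (M.evt x m).2 := s_pos (M := M) hx m
          have hsm' : ((M.αmin + 1)/2) * (M.evt x n).2 ≤ (M.evt x m).2 := hsm
          have h1 : E / (M.evt x m).2 ≤ E / (((M.αmin + 1)/2) * (M.evt x n).2) := by
            apply div_le_div_of_nonneg_left (le_of_lt hE0) ?_ hsm'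
            positivity
          have h2 : D / (M.evt x n).2 + E / (((M.αmin + 1)/2) * (M.evt x n).2)
              ≤ E / (M.evt x n).2 := by
            have e1 : E / (((M.αmin + 1)/2) * (M.evt x n).2)
                = (E / ((M.αmin + 1)/2)) / (M.evt x n).2 := by rw [div_div]
            have hq : E / ((M.αmin + 1)/2) ≤ E - D := by linarith
            have e2 : (E / ((M.αmin + 1)/2)) / (M.evt x n).2
                ≤ (E - D) / (M.evt x n).2 := by gcongr
            have e3 : D / (M.evt x n).2 + (E - D) / (M.evt x n).2 = E / (M.evt x n).2 := by
              rw [← add_div]; ring_nf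
            rw [e1]; linarith
          linarith
  intro k n hnk
  exact key (k - n) n k hnk rfl

include hD hD0 hE0 hDE hrec hx in
lemma t_le_Ex (k : ℕ) : (M.evt x k).1 ≤ E / x := by
  have := time_bound hD hD0 hE0 hDE hrec hx k 0 (Nat.zero_le k)
  rw [evt_zero] at this
  simpa using this

include hD hD0 hE0 hDE hrec hx in
lemma s_unbounded (R : ℝ) : ∃ n, R ≤ (M.evt x n).2 := by
  by_contra hcon
  push_neg at hcon
  have hfin : (M.Λ ∩ Set.Ioc 0 (E/x) ×ˢ Set.Ioc 0 R).Finite := M.Λ_locFin _ _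
  set f : ℕ → ℝ × ℝ := fun n => M.nextSing (M.evt x n).1 (M.evt x n).2 with hf
  have hfeq : ∀ n, (M.evt x (n+1)).1 = (f n).1 := by
    intro n
    rw [evt, if_pos (evt_ne hD hx n)]
  have hmem : ∀ n, f n ∈ M.Λ ∩ Set.Ioc 0 (E/x) ×ˢ Set.Ioc 0 R := by
    intro n
    obtain ⟨⟨hΛ, hτ, hb⟩, _⟩ := nextSing_spec (evt_ne hD hx n)
    refine ⟨hΛ, ⟨(M.Λ_pos _ hΛ).1, ?_⟩, ⟨(M.Λ_pos _ hΛ).2, ?_⟩⟩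
    · rw [← hfeq n]; exact t_le_Ex hD hD0 hE0 hDE hrec hx (n+1)
    · exact le_of_lt (lt_trans hb (hcon n))
  have hinj : Function.Injective f := by
    intro a b hab
    have h1 : (M.evt x (a+1)).1 = (M.evt x (b+1)).1 := by rw [hfeq a, hfeq b, hab]
    have := (t_strictMono hD hx).injective h1
    omega
  exact hfin.not_infinite (Set.infinite_of_injective_forall_mem hinj hmem)

end

end BlowupModel
namespace BlowupModel

/-- The blowup time as a real number (junk unless `x > 0` and density holds). -/
noncomputable def tmaxR (M : BlowupModel) (x : ℝ) : ℝ := ⨆ n, (M.evt x n).1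

variable {M : BlowupModel} {D E : ℝ}

section

variable (hD : M.DProp D) (hD0 : 0 < D) (hE0 : 0 < E) (hDE : D ≤ E)
  (hrec : D + E / ((M.αmin + 1)/2) ≤ E) {x : ℝ} (hx : 0 < x)
include hD hD0 hE0 hDE hrec hx

lemma bddT : BddAbove (Set.range fun n => (M.evt x n).1) := by
  refine ⟨E/x, ?_⟩
  rintro _ ⟨n, rfl⟩
  exact t_le_Ex hD hD0 hE0 hDE hrec hx n

lemma t_le_tmaxR (n : ℕ) : (M.evt x n).1 ≤ M.tmaxR x :=
  le_ciSup (bddT hD hD0 hE0 hDE hrec hx) n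

omit hD hD0 hE0 hDE hrec hx in
lemma tmaxR_le {B : ℝ} (h : ∀ n, (M.evt x n).1 ≤ B) : M.tmaxR x ≤ B :=
  ciSup_le h

lemma tmaxR_nonneg : 0 ≤ M.tmaxR x := by
  have := t_le_tmaxR hD hD0 hE0 hDE hrec hx 0
  rw [evt_zero] at this
  simpa using this

lemma tmaxR_le_Ex : M.tmaxR x ≤ E/x :=
  tmaxR_le fun n => t_le_Ex hD hD0 hE0 hDE hrec hx n

lemma tmax_eq : M.tmax x = ((M.tmaxR x : ℝ) : EReal) := by
  rw [tmax, if_pos (fun n => evt_ne hD hx n)]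
  rw [tmaxR]
  exact (Monotone.map_ciSup_of_continuousAt
    (continuous_coe_real_ereal.continuousAt)
    (EReal.coe_strictMono.monotone) (bddT hD hD0 hE0 hDE hrec hx)).symm

end

end BlowupModel
namespace BlowupModel

variable {M : BlowupModel} {D : ℝ}

/-- Coupling of the processes started at `x ≤ y`: at the `k`-th event of `y` there is
an index `j ≤ k` locating `x`'s process, with two-sided value comparison. -/
lemma coupling (hD : M.DProp D) {x y : ℝ} (hx : 0 < x) (hxy : x ≤ y) (k : ℕ) :
    ∃ j, j ≤ k ∧
      (M.evt x j).1 ≤ (M.evt y k).1 ∧ (M.evt y k).1 < (M.evt x (j+1)).1 ∧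
      (M.evt x j).2 ≤ (M.evt y k).2 ∧
      (M.evt y k).2 ≤ (M.evt x j).2 + M.αmax ^ (k + j) * (y - x) := by
  have hy : 0 < y := lt_of_lt_of_le hx hxy
  have ha1 : (1:ℝ) ≤ M.αmax := one_le_αmax
  induction k with
  | zero =>
    refine ⟨0, le_refl _, ?_, ?_, ?_, ?_⟩
    · rw [evt_zero, evt_zero]
    · have := t_lt_succ hD hx 0
      rw [evt_zero] at this ⊢
      exact this
    · rw [evt_zero, evt_zero]; exact hxy
    · rw [evt_zero, evt_zero]; simp
  | succ k ih =>
    obtain ⟨j, hjk, hI1, hI2, hI3, hI4⟩ := ih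
    obtain ⟨p, hpΛ, hpτ, hpb0, hpb, hp1, hp2, hpm1, hpm2, hpmin⟩ := step_facts hD hy k
    obtain ⟨q, hqΛ, hqτ, hqb0, hqb, hq1, hq2, hqm1, hqm2, hqmin⟩ := step_facts hD hx j
    have hmagp1 : (1:ℝ) ≤ M.mag p := le_of_lt (lt_of_lt_of_le M.one_lt_αmin hpm1)
    have hq_ev : q ∈ M.eventSet (M.evt y k).1 (M.evt y k).2 :=
      ⟨hqΛ, by rw [← hq1]; exact hI2, lt_of_lt_of_le hqb hI3⟩
    have hpq : p.1 ≤ q.1 := hpmin q hq_ev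
    by_cases hcase : p.2 < (M.evt x j).2
    · -- shared event
      have hp_ev : p ∈ M.eventSet (M.evt x j).1 (M.evt x j).2 :=
        ⟨hpΛ, lt_of_le_of_lt hI1 hpτ, hcase⟩
      have hpq1 : p.1 = q.1 := le_antisymm hpq (hqmin p hp_ev)
      have hpqeq : p = q := M.Λ_inj p hpΛ q hqΛ hpq1
      subst hpqeq
      refine ⟨j+1, by omega, ?_, ?_, ?_, ?_⟩
      · rw [hp1, hq1]
      · rw [hp1, ← hq1]; exact t_lt_succ hD hx (j+1)
      · rw [hp2, hq2]
        have : M.mag p * ((M.evt x j).2 - p.2) ≤ M.mag p * ((M.evt y k).2 - p.2) :=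
          mul_le_mul_of_nonneg_left (by linarith) (by linarith)
        linarith
      · rw [hp2, hq2]
        have e1 : M.αmax ^ (k+1+(j+1)) = M.αmax ^ (k+j) * (M.αmax * M.αmax) := by
          rw [show k+1+(j+1) = (k+j)+2 by omega, pow_add]; ring
        have hd0 : 0 ≤ M.αmax ^ (k+j) * (y - x) := by
          have : 0 ≤ y - x := by linarith
          positivity
        have c1 : M.mag p * ((M.evt y k).2 - (M.evt x j).2)
            ≤ M.αmax * ((M.evt y k).2 - (M.evt x j).2) :=
          mul_le_mul_of_nonneg_right hpm2 (by linarith)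
        have c2 : M.αmax * ((M.evt y k).2 - (M.evt x j).2)
            ≤ M.αmax * (M.αmax ^ (k+j) * (y - x)) :=
          mul_le_mul_of_nonneg_left (by linarith) (le_of_lt αmax_pos)
        have c3 : M.αmax * (M.αmax ^ (k+j) * (y - x))
            ≤ M.αmax * (M.αmax * (M.αmax ^ (k+j) * (y - x))) :=
          le_mul_of_one_le_left (mul_nonneg (le_of_lt αmax_pos) hd0) ha1
        rw [e1]
        linarith [c1, c2, c3]
    · -- event of `y` only
      push_neg at hcase
      refine ⟨j, by omega, ?_, ?_, ?_, ?_⟩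
      · rw [hp1]; exact le_of_lt (lt_of_le_of_lt hI1 hpτ)
      · rw [hp1, hq1]
        refine lt_of_le_of_ne hpq ?_
        intro h
        have he := M.Λ_inj p hpΛ q hqΛ h
        rw [he] at hcase
        linarith
      · rw [hp2]
        have : 0 ≤ M.mag p * ((M.evt y k).2 - p.2) :=
          mul_nonneg (by linarith) (by linarith)
        linarith
      · rw [hp2]
        have e1 : M.αmax ^ (k+1+j) = M.αmax * M.αmax ^ (k+j) := by
          rw [show k+1+j = (k+j)+1 by omega, pow_succ]; ring
        have hd0 : 0 ≤ M.αmax ^ (k+j) * (y - x) := by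
          have : 0 ≤ y - x := by linarith
          positivity
        rw [e1]
        linarith [mul_nonneg (sub_nonneg.mpr hpm2) (le_of_lt (sub_pos.mpr hpb)),
          mul_nonneg (sub_nonneg.mpr ha1) (sub_nonneg.mpr hcase),
          mul_nonneg (sub_nonneg.mpr ha1)
            (by linarith [hI4] : (0:ℝ) ≤ (M.evt x j).2 + M.αmax ^ (k+j) * (y - x) - (M.evt y k).2),
          hI3]

end BlowupModel
namespace BlowupModel

lemma pow_mul_le_one {a : ℝ} (ha : 1 ≤ a) {m mm : ℕ} (hmM : m ≤ mm) {c : ℝ}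
    (hc0 : 0 ≤ c) (hc : c < 1 / a ^ mm) : a ^ m * c ≤ 1 := by
  have h0 : (0:ℝ) < a ^ mm := by positivity
  have h2 : a ^ m ≤ a ^ mm := pow_le_pow_right₀ ha hmM
  have h3 : a ^ mm * c < a ^ mm * (1 / a ^ mm) := mul_lt_mul_of_pos_left hc h0
  have h4 : a ^ mm * (1 / a ^ mm) = 1 := by field_simp
  nlinarith [mul_le_mul_of_nonneg_right h2 hc0]

variable {M : BlowupModel} {D E : ℝ}

section

variable (hD : M.DProp D) (hD0 : 0 < D) (hE0 : 0 < E) (hDE : D ≤ E)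
  (hrec : D + E / ((M.αmin + 1)/2) ≤ E)
include hD hD0 hE0 hDE hrec

lemma left_est {x : ℝ} (hx : 0 < x) {ε : ℝ} (hε : 0 < ε) :
    ∃ δ : ℝ, 0 < δ ∧ ∀ y : ℝ, 0 < y → y ≤ x → x - y < δ →
      M.tmaxR y ≤ M.tmaxR x + ε := by
  obtain ⟨n, hn⟩ := s_unbounded hD hD0 hE0 hDE hrec hx (max 2 (E/ε + 1))
  refine ⟨1 / M.αmax ^ (2*n), by have := αmax_pos (M := M); positivity, fun y hy hyx hclose => ?_⟩
  obtain ⟨j, hjk, hI1, hI2, hI3, hI4⟩ := coupling hD hy hyx n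
  have h1 : M.αmax ^ (n+j) * (x - y) ≤ 1 :=
    pow_mul_le_one one_le_αmax (by omega) (by linarith) hclose
  have hsj : max 2 (E/ε + 1) - 1 ≤ (M.evt y j).2 := by linarith
  have hsj1 : 1 ≤ (M.evt y j).2 := by
    have := le_max_left (2:ℝ) (E/ε+1); linarith
  have hsjE : E / ε ≤ (M.evt y j).2 := by
    have := le_max_right (2:ℝ) (E/ε+1); linarith
  have hsjpos : (0:ℝ) < (M.evt y j).2 := by linarith
  have hb : M.tmaxR y ≤ (M.evt y j).1 + E / (M.evt y j).2 := by
    refine tmaxR_le fun k => ?_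
    rcases le_or_gt j k with h | h
    · exact time_bound hD hD0 hE0 hDE hrec hy k j h
    · have h5 : (M.evt y k).1 ≤ (M.evt y j).1 := (t_strictMono hD hy).monotone (le_of_lt h)
      have h6 : 0 ≤ E / (M.evt y j).2 := by positivity
      linarith
  have hfin : E / (M.evt y j).2 ≤ ε := by
    rw [div_le_iff₀ hsjpos]
    have h7 : (E/ε) * ε ≤ (M.evt y j).2 * ε := mul_le_mul_of_nonneg_right hsjE (le_of_lt hε)
    have h8 : (E/ε) * ε = E := by field_simp
    linarith [mul_comm ε (M.evt y j).2]
  have h9 : (M.evt x n).1 ≤ M.tmaxR x := t_le_tmaxR hD hD0 hE0 hDE hrec hx n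
  linarith

lemma right_est {x : ℝ} (hx : 0 < x) (n : ℕ) :
    ∃ δ : ℝ, 0 < δ ∧ ∀ y : ℝ, x ≤ y → y - x < δ → (M.evt x n).1 ≤ M.tmaxR y := by
  have hFfin : (M.Λ ∩ Set.Ioc 0 (M.evt x n).1 ×ˢ Set.Ioc 0 ((M.evt x n).2 + 1)).Finite :=
    M.Λ_locFin _ _
  set N := hFfin.toFinset.card with hN
  refine ⟨1 / M.αmax ^ (N + n), by have := αmax_pos (M := M); positivity, fun y hxy hclose => ?_⟩
  have hy : 0 < y := lt_of_lt_of_le hx hxy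
  by_cases hex : ∃ k, k ≤ N + 1 ∧ (M.evt x n).1 ≤ (M.evt y k).1
  · obtain ⟨k, _, hk⟩ := hex
    exact le_trans hk (t_le_tmaxR hD hD0 hE0 hDE hrec hy k)
  · exfalso
    push_neg at hex
    have hfeq : ∀ i : ℕ, (M.evt y (i+1)).1 = (M.nextSing (M.evt y i).1 (M.evt y i).2).1 := by
      intro i
      rw [evt, if_pos (evt_ne hD hy i)]
    have hmem : ∀ i : ℕ, i ≤ N → M.nextSing (M.evt y i).1 (M.evt y i).2 ∈
        (M.Λ ∩ Set.Ioc 0 (M.evt x n).1 ×ˢ Set.Ioc 0 ((M.evt x n).2 + 1)) := by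
      intro i hi
      obtain ⟨⟨hΛ, hτ, hb⟩, _⟩ := nextSing_spec (evt_ne hD hy i)
      refine ⟨hΛ, ⟨(M.Λ_pos _ hΛ).1, ?_⟩, ⟨(M.Λ_pos _ hΛ).2, ?_⟩⟩
      · rw [← hfeq i]; exact le_of_lt (hex (i+1) (by omega))
      · obtain ⟨j, hjk, hI1, hI2, hI3, hI4⟩ := coupling hD hx hxy i
        have hji : (M.evt x j).1 < (M.evt x n).1 :=
          lt_of_le_of_lt hI1 (hex i (by omega))
        have hjn : j ≤ n := le_of_lt ((t_strictMono hD hx).lt_iff_lt.mp hji)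
        have hsx : (M.evt x j).2 ≤ (M.evt x n).2 := s_mono hD hx hjn
        have hpow : M.αmax ^ (i+j) * (y - x) ≤ 1 :=
          pow_mul_le_one one_le_αmax (by omega) (by linarith) hclose
        linarith
    have hcard : (N + 1 : ℕ) ≤ N := by
      have hinj : Set.InjOn (fun i : Fin (N+1) => M.nextSing (M.evt y i).1 (M.evt y i).2)
          (Finset.univ : Finset (Fin (N+1))) := by
        intro i1 _ i2 _ h
        have h1 : (M.evt y (i1.1+1)).1 = (M.evt y (i2.1+1)).1 := by
          rw [hfeq, hfeq]
          simp only at h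
          rw [h]
        have := (t_strictMono hD hy).injective h1
        exact Fin.ext (by omega)
      have := Finset.card_le_card_of_injOn
        (fun i : Fin (N+1) => M.nextSing (M.evt y i).1 (M.evt y i).2)
        (fun i _ => hFfin.mem_toFinset.mpr (hmem i.1 (by omega)))
        hinj
      simpa [← hN] using this
    omega

end

end BlowupModel
theorem statement8 (M : BlowupModel) (κ : ℝ) (hκ : 0 < κ) (hud : M.UniformDensity κ) :
    (∀ x : ℝ, 0 < x → M.tmax x < ⊤) ∧
      ∀ T : ℝ, 0 < T → ∃ x : ℝ, 0 < x ∧ M.tmax x = (T : EReal) := by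
  classical
  obtain ⟨D, hD0, hDraw⟩ := BlowupModel.exists_D κ hκ hud
  have hD : M.DProp D := hDraw
  have hlam : 1 < (M.αmin + 1)/2 := by have := M.one_lt_αmin; linarith
  have hlam0 : 0 < (M.αmin + 1)/2 := by linarith
  have hlam1 : 0 < (M.αmin + 1)/2 - 1 := by linarith
  set E := D * ((M.αmin + 1)/2) / ((M.αmin + 1)/2 - 1) with hEdef
  have hE0 : 0 < E := by positivity
  have hEeq : E * ((M.αmin + 1)/2 - 1) = D * ((M.αmin + 1)/2) := by
    rw [hEdef, div_mul_cancel₀ _ (ne_of_gt hlam1)]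
  have hDE : D ≤ E := by nlinarith
  have hrec : D + E / ((M.αmin + 1)/2) ≤ E := by
    have h1 : E / ((M.αmin + 1)/2) ≤ E - D ↔ E ≤ (E - D) * ((M.αmin + 1)/2) :=
      div_le_iff₀ hlam0
    have h2 : E ≤ (E - D) * ((M.αmin + 1)/2) := by nlinarith
    have := h1.mpr h2
    linarith
  constructor
  · intro x hx
    rw [BlowupModel.tmax_eq hD hD0 hE0 hDE hrec hx]
    exact EReal.coe_lt_top _
  · intro T hT
    have hH : ∃ H : ℝ, 0 < H ∧ ∀ p ∈ M.Λ, p.1 ≤ T → H < p.2 := by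
      have hTfin : (M.Λ ∩ Set.Ioc 0 T ×ˢ Set.Ioc 0 1).Finite := M.Λ_locFin T 1
      by_cases hFe : (M.Λ ∩ Set.Ioc 0 T ×ˢ Set.Ioc 0 1).Nonempty
      · obtain ⟨p0, hp0, hmin⟩ := Set.exists_min_image _ Prod.snd hTfin hFe
        have hp02 : 0 < p0.2 := hp0.2.2.1
        refine ⟨min 1 (p0.2/2), by positivity, fun p hp hpT => ?_⟩
        by_contra hcon
        push_neg at hcon
        have hp2 : 0 < p.2 := (M.Λ_pos p hp).2
        have hpF : p ∈ M.Λ ∩ Set.Ioc 0 T ×ˢ Set.Ioc 0 1 :=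
          ⟨hp, ⟨(M.Λ_pos p hp).1, hpT⟩, ⟨hp2, le_trans hcon (min_le_left _ _)⟩⟩
        have := hmin p hpF
        have := min_le_right (1:ℝ) (p0.2/2)
        linarith
      · rw [Set.not_nonempty_iff_eq_empty] at hFe
        refine ⟨1, one_pos, fun p hp hpT => ?_⟩
        by_contra hcon
        push_neg at hcon
        have hp2 : 0 < p.2 := (M.Λ_pos p hp).2
        have : p ∈ M.Λ ∩ Set.Ioc 0 T ×ˢ Set.Ioc 0 1 :=
          ⟨hp, ⟨(M.Λ_pos p hp).1, hpT⟩, ⟨hp2, hcon⟩⟩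
        rw [hFe] at this
        exact this
    obtain ⟨H, hH0, hHs⟩ := hH
    set S := {z : ℝ | 0 < z ∧ T ≤ M.tmaxR z} with hSdef
    have hHS : ∀ z : ℝ, 0 < z → z ≤ H → z ∈ S := by
      intro z hz hzH
      obtain ⟨q, hqΛ, hqτ, hqb0, hqb, hq1, hq2, _⟩ := BlowupModel.step_facts hD hz 0
      rw [BlowupModel.evt_zero] at hqb
      have hTq : T < q.1 := by
        by_contra hcon
        push_neg at hcon
        have := hHs q hqΛ hcon
        simp only at hqb
        linarith
      refine ⟨hz, ?_⟩
      have h1 : (M.evt z 1).1 ≤ M.tmaxR z :=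
        BlowupModel.t_le_tmaxR hD hD0 hE0 hDE hrec hz 1
      rw [hq1] at h1
      linarith
    have hSne : S.Nonempty := ⟨H, hHS H hH0 le_rfl⟩
    have hSbdd : BddAbove S := by
      refine ⟨E/T, fun z hz => ?_⟩
      obtain ⟨hz0, hzT⟩ := hz
      have h1 : M.tmaxR z ≤ E/z := BlowupModel.tmaxR_le_Ex hD hD0 hE0 hDE hrec hz0
      have h2 : T ≤ E/z := le_trans hzT h1
      rw [le_div_iff₀ hz0] at h2
      rw [le_div_iff₀ hT]
      linarith [mul_comm z T]
    set xs := sSup S with hxsdef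
    have hxs : 0 < xs := lt_of_lt_of_le hH0 (le_csSup hSbdd (hHS H hH0 le_rfl))
    have hge : T ≤ M.tmaxR xs := by
      refine le_of_forall_pos_le_add fun ε hε => ?_
      obtain ⟨δ, hδ0, hδ⟩ := BlowupModel.left_est hD hD0 hE0 hDE hrec hxs hε
      obtain ⟨y, hyS, hylt⟩ := exists_lt_of_lt_csSup hSne (by linarith : xs - δ < xs)
      have hyx : y ≤ xs := le_csSup hSbdd hyS
      have := hδ y hyS.1 hyx (by linarith)
      linarith [hyS.2]
    have hle : M.tmaxR xs ≤ T := by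
      refine BlowupModel.tmaxR_le fun n => ?_
      obtain ⟨δ, hδ0, hδ⟩ := BlowupModel.right_est hD hD0 hE0 hDE hrec hxs n
      have h1 : (M.evt xs n).1 ≤ M.tmaxR (xs + δ/2) := hδ _ (by linarith) (by linarith)
      have h2 : xs + δ/2 ∉ S := fun h =>
        absurd (le_csSup hSbdd h) (not_le.mpr (by linarith : xs < xs + δ/2))
      have h3 : M.tmaxR (xs + δ/2) < T := by
        by_contra h4
        push_neg at h4
        exact h2 ⟨by linarith, h4⟩
      linarith
    refine ⟨xs, hxs, ?_⟩
    rw [BlowupModel.tmax_eq hD hD0 hE0 hDE hrec hxs, le_antisymm hle hge]
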